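/- Let ψ: F_n → SL(2,ℤ) send t_i to A = [[1,1],[0,1]] for i odd and to B = [[1,0],[-1,1]] for i even, and let χ: F_n → PSL(2,ℤ) be the composition with the projection. If a braid β stabilizes χ under the Hurwitz action, then β stabilizes ψ: indeed, for each i there is ε_i ∈ {±1} with (β·ψ)(t_i) = ε_i·ψ(t_i), and since trace((β·ψ)(t_i)) = 2 (each entry of the Hurwitz-transformed tuple is conjugate to A or B, which have trace 2) while trace(-ψ(t_i)) = -2, all ε_i = 1. -/

import Mathlib

/-- The local monodromy matrix of an `I₁` fibre. -/
def A : Matrix.SpecialLinearGroup (Fin 2) ℤ :=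
  ⟨!![1, 1; 0, 1], by norm_num [Matrix.det_fin_two_of]⟩

/-- The other local monodromy matrix of an `I₁` fibre. -/
def B : Matrix.SpecialLinearGroup (Fin 2) ℤ :=
  ⟨!![1, 0; -1, 1], by norm_num [Matrix.det_fin_two_of]⟩

/-- The homomorphism `ψ : F_n → SL(2,ℤ)`, recorded by the images of the free
generators: `t_i ↦ A` for `i` odd and `t_i ↦ B` for `i` even (with `0`-based
indexing, index `i` corresponds to the generator `t_{i+1}`). -/
def ψ : ℕ → Matrix.SpecialLinearGroup (Fin 2) ℤ := fun i => if i % 2 = 0 then A else B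

/-- The Hurwitz action of the braid generator `σ_i`. -/
def hAct {G : Type*} [Group G] (i : ℕ) (g : ℕ → G) : ℕ → G := fun j =>
  if j = i then g i * g (i + 1) * (g i)⁻¹ else if j = i + 1 then g i else g j

/-- The Hurwitz action of the inverse braid generator `σ_i⁻¹`. -/
def hActInv {G : Type*} [Group G] (i : ℕ) (g : ℕ → G) : ℕ → G := fun j =>
  if j = i then g (i + 1) else if j = i + 1 then (g (i + 1))⁻¹ * g i * g (i + 1) else g j

/-- The Hurwitz action of a single braid letter. -/
def hw {G : Type*} [Group G] (l : ℕ × Bool) : (ℕ → G) → (ℕ → G) :=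
  if l.2 then hAct l.1 else hActInv l.1

/-- The Hurwitz action of a braid word. -/
def hwList {G : Type*} [Group G] : List (ℕ × Bool) → (ℕ → G) → (ℕ → G)
  | [] => id
  | l :: w => hw l ∘ hwList w

lemma hw_conj {G : Type*} [Group G] (l : ℕ × Bool) (g : ℕ → G) (k : ℕ) :
    ∃ c : G, ∃ j : ℕ, hw l g k = c * g j * c⁻¹ := by
  rcases l with ⟨i, b⟩
  cases b <;> simp only [hw, Bool.false_eq_true, if_true, if_false]
  · by_cases h1 : k = i
    · exact ⟨1, i + 1, by simp [hActInv, h1]⟩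
    · by_cases h2 : k = i + 1
      · exact ⟨(g (i+1))⁻¹, i, by simp [hActInv, h1, h2, mul_assoc]⟩
      · exact ⟨1, k, by simp [hActInv, h1, h2]⟩
  · by_cases h1 : k = i
    · exact ⟨g i, i + 1, by simp [hAct, h1]⟩
    · by_cases h2 : k = i + 1
      · exact ⟨1, i, by simp [hAct, h1, h2]⟩
      · exact ⟨1, k, by simp [hAct, h1, h2]⟩

lemma hwList_conj {G : Type*} [Group G] (w : List (ℕ × Bool)) (g : ℕ → G) (k : ℕ) :
    ∃ c : G, ∃ j : ℕ, hwList w g k = c * g j * c⁻¹ := by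
  induction w generalizing k with
  | nil => exact ⟨1, k, by simp [hwList]⟩
  | cons l t ih =>
    obtain ⟨c, j, hc⟩ := hw_conj l (hwList t g) k
    obtain ⟨d, m, hd⟩ := ih j
    exact ⟨c * d, m, by simp [hwList, hc, hd, mul_assoc]⟩

lemma trace_psi (i : ℕ) : Matrix.trace (ψ i).val = 2 := by
  unfold ψ A B
  by_cases h : i % 2 = 0 <;> simp [h, Matrix.trace_fin_two]

lemma trace_hwList (w : List (ℕ × Bool)) (k : ℕ) :
    Matrix.trace ((hwList w ψ k : Matrix.SpecialLinearGroup (Fin 2) ℤ)).val = 2 := by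
  obtain ⟨c, j, hc⟩ := hwList_conj w ψ k
  rw [hc]
  have : (c * ψ j * c⁻¹ : Matrix.SpecialLinearGroup (Fin 2) ℤ).val
      = c.val * (ψ j).val * (c⁻¹ : Matrix.SpecialLinearGroup (Fin 2) ℤ).val := by simp
  rw [this, Matrix.trace_mul_comm, ← mul_assoc]
  have h2 : (c⁻¹ : Matrix.SpecialLinearGroup (Fin 2) ℤ).val * c.val = 1 := by
    have h3 := congrArg (Subtype.val) (inv_mul_cancel c)
    rw [Matrix.SpecialLinearGroup.coe_mul] at h3
    exact h3
  rw [h2, one_mul, trace_psi]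

/-- Let `χ : F_n → PSL(2,ℤ)` be the composition of `ψ` with the projection
`SL(2,ℤ) → PSL(2,ℤ) = SL(2,ℤ)/{±I}`. If a braid `β` (a word `w` in the
generators `σ_i`, `i + 1 < n`, and their inverses) stabilizes `χ` under the
Hurwitz action, then `β` already stabilizes `ψ`: each `(β·ψ)(t_i) = ε_i ψ(t_i)`
with `ε_i = ±1`, and the trace argument (conjugates of `A`, `B` have trace `2`
while `-ψ(t_i)` has trace `-2`) forces `ε_i = 1` for all `i`. -/
theorem stabilizer_PSL_eq_stabilizer_SL (n : ℕ) (w : List (ℕ × Bool))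
    (hwn : ∀ l ∈ w, l.1 + 1 < n)
    (hχ : ∀ i : ℕ,
      (QuotientGroup.mk (hwList w ψ i) :
          Matrix.SpecialLinearGroup (Fin 2) ℤ ⧸
            Subgroup.center (Matrix.SpecialLinearGroup (Fin 2) ℤ)) =
        QuotientGroup.mk (ψ i)) :
    hwList w ψ = ψ := by
  funext k
  have h := (QuotientGroup.eq).mp (hχ k)
  obtain ⟨r, hr, hscal⟩ := Matrix.SpecialLinearGroup.mem_center_iff.mp h
  simp only [Fintype.card_fin] at hr
  have heq : (ψ k).val =
      ((hwList w ψ k : Matrix.SpecialLinearGroup (Fin 2) ℤ)).val * Matrix.scalar (Fin 2) r := by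
    have h2 : hwList w ψ k * ((hwList w ψ k)⁻¹ * ψ k) = ψ k := by group
    have h3 := congrArg (Subtype.val) h2
    push_cast at h3
    rw [← h3]
    congr 1
    exact hscal.symm ▸ rfl
  have hr2 : r * r = 1 := by rw [← sq]; exact hr
  rcases Int.eq_one_or_neg_one_of_mul_eq_one hr2 with h1 | h1
  · apply Subtype.ext
    rw [heq, h1]
    simp
  · exfalso
    have ht := congrArg Matrix.trace heq
    rw [trace_psi, h1] at ht
    have : Matrix.scalar (Fin 2) (-1 : ℤ) = -1 := by
      ext i j; fin_cases i <;> fin_cases j <;> simp [Matrix.scalar]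
    rw [this] at ht
    simp only [mul_neg_one, Matrix.trace_neg, trace_hwList] at ht
    norm_num at ht
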